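/- In an infinite sequence of reading lists $S_{(d_1,n_1)}, S_{(d_2,n_2)}, \dots$ (with parameter $M$) that forms an antichain under the reading list order, either the sequence $(n_i)$ is bounded or the sequence $(d_i)$ is bounded. -/

import Mathlib

/-- A reading list of type `(d, n)` with parameter `M`: a tuple `(S¹, …, Sⁿ)` where each
`Sⁱ` is a `d`-element subset of `[M·d] = {1, …, M·d}`. -/
structure ReadingList (M : ℕ) where
  d : ℕ
  n : ℕ
  S : Fin n → Finset ℕ
  subset_range : ∀ i, S i ⊆ Finset.Icc 1 (M * d)
  card_eq : ∀ i, (S i).card = d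

/-- The reading list order: `A ≤ B` iff there is a strictly increasing injection `f` on
indices and strictly increasing indices `k₁ < ⋯ < kₙ` with `f(Aⁱ) ⊆ B^{kᵢ}` for all `i`. -/
def ReadingList.le {M : ℕ} (A B : ReadingList M) : Prop :=
  ∃ (f : ℕ → ℕ) (k : Fin A.n → Fin B.n), StrictMono f ∧ StrictMono k ∧
    ∀ i, (A.S i).image f ⊆ B.S (k i)

lemma descFactorial_ratio (M d m : ℕ) (h : 2 * m ≤ d) :
    (M * d).descFactorial m ≤ (2 * M) ^ m * d.descFactorial m := by
  induction m with
  | zero => simp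
  | succ k ih =>
    rw [Nat.descFactorial_succ, Nat.descFactorial_succ]
    have ihk := ih (by omega)
    have hMd : M * d ≤ 2 * M * (d - k) := by
      have h1 : d ≤ 2 * (d - k) := by omega
      calc M * d ≤ M * (2 * (d - k)) := Nat.mul_le_mul_left M h1
        _ = 2 * M * (d - k) := by ring
    calc (M * d - k) * (M * d).descFactorial k
        ≤ (M * d) * ((2 * M) ^ k * d.descFactorial k) :=
          Nat.mul_le_mul (Nat.sub_le _ _) ihk
      _ ≤ (2 * M * (d - k)) * ((2 * M) ^ k * d.descFactorial k) :=
          Nat.mul_le_mul_right _ hMd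
      _ = (2 * M) ^ (k + 1) * ((d - k) * d.descFactorial k) := by ring

lemma choose_ratio (M d m : ℕ) (h : 2 * m ≤ d) :
    (M * d).choose m ≤ (2 * M) ^ m * d.choose m := by
  have h1 := descFactorial_ratio M d m h
  rw [Nat.descFactorial_eq_factorial_mul_choose, Nat.descFactorial_eq_factorial_mul_choose] at h1
  have h2 : m.factorial * (M * d).choose m ≤ m.factorial * ((2 * M) ^ m * d.choose m) := by
    calc m.factorial * (M * d).choose m ≤ (2 * M) ^ m * (m.factorial * d.choose m) := h1
      _ = m.factorial * ((2 * M) ^ m * d.choose m) := by ring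
  exact Nat.le_of_mul_le_mul_left h2 (Nat.factorial_pos m)

/-- Pigeonhole lemma: if `B` has a much larger degree and width than `A`, then `A ≤ B`. -/
lemma ReadingList.le_of_big {M : ℕ} (hM : 1 ≤ M) (A B : ReadingList M)
    (hd : 2 * (M * A.d) ≤ B.d) (hn : A.n * (2 * M) ^ (M * A.d) ≤ B.n) : A.le B := by
  classical
  rcases Nat.eq_zero_or_pos A.n with h0 | h0
  · refine ⟨id, fun i => Fin.elim0 (i.cast h0), strictMono_id, ?_, ?_⟩
    · intro i j _; exact Fin.elim0 (i.cast h0)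
    · intro i; exact Fin.elim0 (i.cast h0)
  obtain ⟨m, hmdef⟩ : ∃ m, M * A.d = m := ⟨_, rfl⟩
  rw [hmdef] at hd hn
  have key : ∃ T ∈ (Finset.Icc 1 (M * B.d)).powersetCard m,
      A.n ≤ ((Finset.univ : Finset (Fin B.n)).filter fun k => T ⊆ B.S k).card := by
    by_contra hcon
    push_neg at hcon
    have count1 : ∑ T ∈ (Finset.Icc 1 (M * B.d)).powersetCard m,
        ((Finset.univ : Finset (Fin B.n)).filter fun k => T ⊆ B.S k).card
        = B.n * (B.d).choose m := by
      have step : ∀ T : Finset ℕ, ((Finset.univ : Finset (Fin B.n)).filter fun k => T ⊆ B.S k).card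
          = ∑ k : Fin B.n, if T ⊆ B.S k then 1 else 0 := by
        intro T; rw [Finset.card_filter]
      simp_rw [step]
      rw [Finset.sum_comm]
      have step2 : ∀ k : Fin B.n, (∑ T ∈ (Finset.Icc 1 (M * B.d)).powersetCard m,
          if T ⊆ B.S k then 1 else 0) = (B.d).choose m := by
        intro k
        rw [← Finset.card_filter]
        have heq : ((Finset.Icc 1 (M * B.d)).powersetCard m).filter (fun T => T ⊆ B.S k)
            = (B.S k).powersetCard m := by
          ext T
          simp only [Finset.mem_filter, Finset.mem_powersetCard]
          constructor
          · rintro ⟨⟨-, hc⟩, hsub⟩; exact ⟨hsub, hc⟩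
          · rintro ⟨hsub, hc⟩
            exact ⟨⟨hsub.trans (B.subset_range k), hc⟩, hsub⟩
        rw [heq, Finset.card_powersetCard, B.card_eq]
      simp_rw [step2]
      simp [Finset.card_univ, mul_comm]
    have hub : ∑ T ∈ (Finset.Icc 1 (M * B.d)).powersetCard m,
        ((Finset.univ : Finset (Fin B.n)).filter fun k => T ⊆ B.S k).card
        ≤ (M * B.d).choose m * (A.n - 1) := by
      calc ∑ T ∈ (Finset.Icc 1 (M * B.d)).powersetCard m,
          ((Finset.univ : Finset (Fin B.n)).filter fun k => T ⊆ B.S k).card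
          ≤ ∑ _T ∈ (Finset.Icc 1 (M * B.d)).powersetCard m, (A.n - 1) := by
            apply Finset.sum_le_sum
            intro T hT
            have := hcon T hT
            omega
        _ = (M * B.d).choose m * (A.n - 1) := by
            rw [Finset.sum_const, smul_eq_mul, Finset.card_powersetCard, Nat.card_Icc]
            norm_num
    have hratio := choose_ratio M B.d m (by omega)
    have hcpos : 0 < (B.d).choose m := Nat.choose_pos (by omega)
    have hXpos : 0 < (2 * M) ^ m * (B.d).choose m :=
      Nat.mul_pos (Nat.pow_pos (by omega)) hcpos
    have hchain : A.n * ((2 * M) ^ m * (B.d).choose m)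
        ≤ (A.n - 1) * ((2 * M) ^ m * (B.d).choose m) := by
      calc A.n * ((2 * M) ^ m * (B.d).choose m)
          = (A.n * (2 * M) ^ m) * (B.d).choose m := by ring
        _ ≤ B.n * (B.d).choose m := Nat.mul_le_mul_right _ hn
        _ = ∑ T ∈ (Finset.Icc 1 (M * B.d)).powersetCard m,
            ((Finset.univ : Finset (Fin B.n)).filter fun k => T ⊆ B.S k).card := count1.symm
        _ ≤ (M * B.d).choose m * (A.n - 1) := hub
        _ ≤ ((2 * M) ^ m * (B.d).choose m) * (A.n - 1) := Nat.mul_le_mul_right _ hratio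
        _ = (A.n - 1) * ((2 * M) ^ m * (B.d).choose m) := by ring
    have := Nat.le_of_mul_le_mul_right hchain hXpos
    omega
  obtain ⟨T, hT, hKcard⟩ := key
  rw [Finset.mem_powersetCard] at hT
  obtain ⟨hTsub, hTcard⟩ := hT
  have hKcard' : A.n ≤ ((Finset.univ : Finset (Fin B.n)).filter fun k => T ⊆ B.S k).card := hKcard
  let k : Fin A.n → Fin B.n :=
    fun i => ((Finset.univ : Finset (Fin B.n)).filter fun k => T ⊆ B.S k).orderEmbOfCardLe hKcard' i
  have hkmono : StrictMono k :=
    (((Finset.univ : Finset (Fin B.n)).filter fun k => T ⊆ B.S k).orderEmbOfCardLe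
      hKcard').strictMono
  have hkT : ∀ i, T ⊆ B.S (k i) := by
    intro i
    have hmem := Finset.orderEmbOfCardLe_mem _ hKcard' i
    exact (Finset.mem_filter.1 hmem).2
  rcases Nat.eq_zero_or_pos m with hm0 | hm0
  · have hAd : A.d = 0 := by
      rcases Nat.mul_eq_zero.1 (hmdef.trans hm0) with h | h
      · omega
      · exact h
    refine ⟨id, k, strictMono_id, hkmono, ?_⟩
    intro i
    have : A.S i = ∅ := Finset.card_eq_zero.1 (by rw [A.card_eq, hAd])
    simp [this]
  · set t : Fin m ↪o ℕ := T.orderEmbOfFin hTcard with htdef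
    have ht1 : ∀ j : Fin m, 1 ≤ t j := by
      intro j
      have := hTsub (T.orderEmbOfFin_mem hTcard j)
      rw [Finset.mem_Icc] at this
      exact this.1
    set f : ℕ → ℕ := fun x => if x = 0 then 0 else if x ≤ m then
      t ⟨min (x - 1) (m - 1), by omega⟩ else t ⟨m - 1, by omega⟩ + (x - m) with hfdef
    have hf0 : f 0 = 0 := by simp [hfdef]
    have hfval : ∀ x (hx1 : 1 ≤ x) (hxm : x ≤ m), f x = t ⟨x - 1, by omega⟩ := by
      intro x hx1 hxm
      simp only [hfdef]
      rw [if_neg (by omega), if_pos hxm]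
      congr 1
      exact Fin.ext (by simp only; omega)
    have hfbig : ∀ x, m < x → f x = t ⟨m - 1, by omega⟩ + (x - m) := by
      intro x hx
      simp only [hfdef]
      rw [if_neg (by omega), if_neg (by omega)]
    have hfmono : StrictMono f := by
      apply strictMono_nat_of_lt_succ
      intro x
      rcases Nat.eq_zero_or_pos x with rfl | hx0
      · rw [hf0, hfval 1 (le_refl 1) hm0]
        exact ht1 _
      · rcases lt_or_ge x m with hxm | hxm
        · rw [hfval x hx0 (by omega), hfval (x + 1) (by omega) (by omega)]
          apply t.strictMono
          rw [Fin.mk_lt_mk]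
          omega
        · rcases eq_or_lt_of_le hxm with hxe | hxm'
          · rw [hfval x hx0 (by omega), hfbig (x + 1) (by omega)]
            have h1 : x + 1 - m = 1 := by omega
            rw [h1]
            have h2 : (⟨x - 1, by omega⟩ : Fin m) = ⟨m - 1, by omega⟩ :=
              Fin.ext (by simp only; omega)
            rw [h2]
            exact Nat.lt_succ_self _
          · rw [hfbig x hxm', hfbig (x + 1) (by omega)]
            omega
    refine ⟨f, k, hfmono, hkmono, ?_⟩
    intro i b hb
    rw [Finset.mem_image] at hb
    obtain ⟨a, ha, rfl⟩ := hb
    have hrange := A.subset_range i ha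
    rw [hmdef, Finset.mem_Icc] at hrange
    rw [hfval a hrange.1 hrange.2]
    exact hkT i (T.orderEmbOfFin_mem hTcard _)

/-- From a `SublistForall₂ (⊆)` between the lists of sets, conclude `le`. -/
lemma ReadingList.le_of_sublistForall₂ {M : ℕ} (A B : ReadingList M)
    (h : List.SublistForall₂ (· ⊆ ·) (List.ofFn A.S) (List.ofFn B.S)) : A.le B := by
  classical
  rw [List.sublistForall₂_iff] at h
  obtain ⟨l, hforall, hsub⟩ := h
  rw [List.sublist_iff_exists_fin_orderEmbedding_get_eq] at hsub
  obtain ⟨φ, hφ⟩ := hsub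
  have hlen1 : (List.ofFn A.S).length = A.n := List.length_ofFn
  have hlen2 : (List.ofFn B.S).length = B.n := List.length_ofFn
  have hlenl : l.length = A.n := by rw [← hforall.length_eq, hlen1]
  refine ⟨id, fun i => ⟨(φ ⟨i.val, by omega⟩).val, by
    have := (φ ⟨i.val, by omega⟩).isLt; omega⟩, strictMono_id, ?_, ?_⟩
  · intro a b hab
    rw [Fin.mk_lt_mk]
    exact φ.strictMono (show (⟨a.val, _⟩ : Fin l.length) < ⟨b.val, _⟩ from hab)
  · intro i b hb
    rw [Finset.image_id] at hb
    have p1 : (i : ℕ) < (List.ofFn A.S).length := by omega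
    have p2 : (i : ℕ) < l.length := by omega
    have hstep1 : A.S i ⊆ l.get ⟨i.val, p2⟩ := by
      have := hforall.get p1 p2
      rwa [List.get_ofFn] at this
    have hstep2 := hφ ⟨i.val, p2⟩
    rw [List.get_ofFn] at hstep2
    apply hstep2 ▸ (hstep1 hb)

/-- In an infinite antichain of reading lists, either the widths `nᵢ` are bounded or the
degrees `dᵢ` are bounded. -/
theorem antichain_n_or_d_bounded (M : ℕ) (hM : 1 ≤ M) (g : ℕ → ReadingList M)
    (h : ∀ i j : ℕ, i < j → ¬ (g i).le (g j) ∧ ¬ (g j).le (g i)) :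
    (∃ B : ℕ, ∀ i, (g i).n ≤ B) ∨ (∃ B : ℕ, ∀ i, (g i).d ≤ B) := by
  classical
  by_contra hcon
  push_neg at hcon
  obtain ⟨hn, _hd⟩ := hcon
  by_cases hinf : ∃ D, {i | (g i).d ≤ D}.Infinite
  · -- Higman case: infinitely many indices with bounded degree.
    obtain ⟨D, hD⟩ := hinf
    haveI : Infinite {i | (g i).d ≤ D} := hD.to_subtype
    let e : ℕ ↪o ℕ := Nat.orderEmbeddingOfSet {i | (g i).d ≤ D}
    have he : ∀ n, (g (e n)).d ≤ D := by
      intro n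
      have : e n ∈ {i | (g i).d ≤ D} := by
        rw [Nat.orderEmbeddingOfSet_apply]
        exact (Nat.Subtype.ofNat {i | (g i).d ≤ D} n).2
      exact this
    have hAfin : ({u : Finset ℕ | u ⊆ Finset.Icc 1 (M * D)}).Finite := by
      have hsub : {u : Finset ℕ | u ⊆ Finset.Icc 1 (M * D)}
          ⊆ ↑((Finset.Icc 1 (M * D)).powerset) := by
        intro u hu
        exact Finset.mem_coe.2 (Finset.mem_powerset.2 hu)
      exact Set.Finite.subset ((Finset.Icc 1 (M * D)).powerset.finite_toSet) hsub
    haveI : IsRefl (Finset ℕ) (· ⊆ ·) := ⟨fun _ => Finset.Subset.refl _⟩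
    haveI : IsTrans (Finset ℕ) (· ⊆ ·) := ⟨fun _ _ _ => Finset.Subset.trans⟩
    haveI : IsPreorder (Finset ℕ) (· ⊆ ·) := {}
    have hpwo := hAfin.partiallyWellOrderedOn (r := (· ⊆ ·))
    have hH := Set.PartiallyWellOrderedOn.partiallyWellOrderedOn_sublistForall₂
      (α := Finset ℕ) (· ⊆ ·) hpwo
    obtain ⟨a, b, hab, hrel⟩ := hH.exists_lt (f := fun i => List.ofFn (g (e i)).S) (by
      intro i x hx
      rw [List.mem_ofFn] at hx
      obtain ⟨j, rfl⟩ := hx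
      intro y hy
      have := (g (e i)).subset_range j hy
      rw [Finset.mem_Icc] at this ⊢
      refine ⟨this.1, this.2.trans ?_⟩
      exact Nat.mul_le_mul_left M (he i))
    have hle : (g (e a)).le (g (e b)) := ReadingList.le_of_sublistForall₂ _ _ hrel
    exact (h (e a) (e b) (e.strictMono hab)).1 hle
  · -- Finite-degree-sets case: degrees tend to infinity; use the pigeonhole lemma.
    push_neg at hinf
    have hfin : ∀ D, {i | (g i).d ≤ D}.Finite := by
      intro D
      exact hinf D
    set A := g 0 with hA
    obtain ⟨m, hmdef⟩ : ∃ m, M * A.d = m := ⟨_, rfl⟩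
    have hFfin := hfin (2 * m)
    set F := hFfin.toFinset with hF
    set N := F.sup (fun i => (g i).n) with hN
    obtain ⟨j, hj⟩ := hn (max N (A.n * (2 * M) ^ m))
    have hjN : N < (g j).n := lt_of_le_of_lt (le_max_left _ _) hj
    have hjn : A.n * (2 * M) ^ m < (g j).n := lt_of_le_of_lt (le_max_right _ _) hj
    have hjd : 2 * m ≤ (g j).d := by
      by_contra hc
      push_neg at hc
      have hjF : j ∈ F := by
        rw [hF, Set.Finite.mem_toFinset]
        exact Set.mem_setOf.2 (by omega)
      have h2 := Finset.le_sup (f := fun i => (g i).n) hjF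
      have h3 : (g j).n ≤ N := h2
      omega
    have hj0 : 0 < j := by
      rcases Nat.eq_zero_or_pos j with rfl | h'
      · have hpow : 1 ≤ (2 * M) ^ m := Nat.one_le_pow _ _ (by omega)
        have : A.n ≤ A.n * (2 * M) ^ m := Nat.le_mul_of_pos_right _ (by omega)
        rw [← hA] at hjn
        omega
      · exact h'
    have hle : (g 0).le (g j) := by
      apply ReadingList.le_of_big hM
      · rw [← hA, hmdef]; exact hjd
      · rw [← hA, hmdef]; omega
    exact (h 0 j hj0).1 hle
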